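/- Let q be a power of a prime p. For any sequence S over F_q and N ≥ 2, let k be the nonnegative integer with p^k ≤ N−1 < p^{k+1}. Then E_N(S) ≤ ⌊(N−1)/p^k⌋ · p^k. -/

import Mathlib

section Helpers


open PowerSeries

variable {F : Type*} [Field F] (p : ℕ) [Fact p.Prime] [CharP F p]

theorem coeff_pow_p (f : PowerSeries F) (n : ℕ) :
    PowerSeries.coeff n (f ^ p) =
      if p ∣ n then (PowerSeries.coeff (n / p) f) ^ p else 0 := by
  have hp : 0 < p := (Fact.out : p.Prime).pos
  set g : Polynomial F := PowerSeries.trunc (n + 1) f with hg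
  have hdvd : (PowerSeries.X : PowerSeries F) ^ (n + 1) ∣ f - (g : PowerSeries F) := by
    rw [PowerSeries.X_pow_dvd_iff]
    intro m hm
    simp [hg, PowerSeries.coeff_trunc, hm, map_sub, Polynomial.coeff_coe]
  have hdvd2 : (PowerSeries.X : PowerSeries F) ^ (n + 1) ∣ f ^ p - (g : PowerSeries F) ^ p :=
    hdvd.trans (sub_dvd_pow_sub_pow _ _ p)
  have hco : PowerSeries.coeff n (f ^ p) = PowerSeries.coeff n ((g : PowerSeries F) ^ p) := by
    have := (PowerSeries.X_pow_dvd_iff.mp hdvd2) n (Nat.lt_succ_self n)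
    rw [map_sub, sub_eq_zero] at this
    exact this
  rw [hco, ← Polynomial.coe_pow, Polynomial.coeff_coe, ← Polynomial.map_frobenius_expand (p := p),
    Polynomial.coeff_map, Polynomial.coeff_expand hp]
  split_ifs with h
  · rw [frobenius_def, hg, PowerSeries.coeff_trunc]
    rw [if_pos (Nat.lt_succ_of_le (Nat.div_le_self n p))]
  · rw [frobenius_def, zero_pow hp.ne']

theorem coeff_pow_p_pow (f : PowerSeries F) (k n : ℕ) :
    PowerSeries.coeff n (f ^ p ^ k) =
      if p ^ k ∣ n then (PowerSeries.coeff (n / p ^ k) f) ^ p ^ k else 0 := by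
  have hp : 0 < p := (Fact.out : p.Prime).pos
  induction k generalizing n with
  | zero => simp
  | succ k ih =>
    rw [pow_succ, pow_mul, coeff_pow_p p]
    by_cases hd : p ^ k * p ∣ n
    · have hp1 : p ∣ n := (dvd_mul_left p (p ^ k)).trans hd
      have hk' : p ^ k ∣ n / p := Nat.dvd_div_of_mul_dvd (by rwa [mul_comm] at hd)
      rw [if_pos hp1, ih, if_pos hk', if_pos hd, Nat.div_div_eq_div_mul,
        mul_comm p (p ^ k), ← pow_mul]
    · rw [if_neg hd]
      by_cases hp1 : p ∣ n
      · rw [if_pos hp1, ih, if_neg, zero_pow hp.ne']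
        intro hk'
        exact hd (by rw [mul_comm]; exact (Nat.dvd_div_iff_mul_dvd hp1).mp hk')
      · rw [if_neg hp1]

end Helpers


/-- The `N`-th linear complexity of a sequence `s` over a field: the length of a
shortest linear recurrence satisfied by the first `N` terms. -/
noncomputable def linComplexityN {F : Type*} [Field F] (s : ℕ → F) (N : ℕ) : ℕ :=
  sInf {L | ∃ c : Fin L → F, ∀ i, i + L < N →
    s (i + L) + ∑ ℓ : Fin L, c ℓ * s (i + ℓ.1) = 0}

open Classical in
/-- The `N`-th expansion complexity of a sequence `s` over a field: `0` if the first
`N` terms vanish, otherwise the least total degree of a nonzero bivariate polynomial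
`h(x,y)` with `h(x, G(x)) ≡ 0 mod x^N`, where `G` is the generating function of `s`. -/
noncomputable def expComplexityN {F : Type*} [Field F] (s : ℕ → F) (N : ℕ) : ℕ :=
  if ∀ i < N, s i = 0 then 0 else
  sInf {d | ∃ h : MvPolynomial (Fin 2) F, h ≠ 0 ∧ h.totalDegree = d ∧
    (PowerSeries.X : PowerSeries F) ^ N ∣
      MvPolynomial.aeval ![(PowerSeries.X : PowerSeries F), PowerSeries.mk s] h}

theorem expComplexityN_char_upper_bound {F : Type*} [Field F] [Fintype F]
    (p : ℕ) [Fact p.Prime] [CharP F p]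
    (s : ℕ → F) (N : ℕ) (hN : 2 ≤ N) (k : ℕ)
    (hk1 : p ^ k ≤ N - 1) (hk2 : N - 1 < p ^ (k + 1)) :
    expComplexityN s N ≤ ((N - 1) / p ^ k) * p ^ k := by
  rw [expComplexityN]
  have hp : 0 < p := (Fact.out : p.Prime).pos
  set q := p ^ k with hq
  have hq0 : 0 < q := Nat.pow_pos hp
  set m := (N - 1) / q with hm
  have hm1 : 1 ≤ m := (Nat.one_le_div_iff hq0).mpr hk1
  set h : MvPolynomial (Fin 2) F :=
    MvPolynomial.X 1 ^ q -
      ∑ i ∈ Finset.range (m + 1), MvPolynomial.C (s i ^ q) * MvPolynomial.X 0 ^ (i * q) with hh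
  split_ifs with h0
  · exact Nat.zero_le _
  have hne : h ≠ 0 := by
    intro hzero
    have : MvPolynomial.coeff (Finsupp.single 1 q) h = 1 := by
      rw [hh, MvPolynomial.coeff_sub, MvPolynomial.coeff_X_pow, if_pos rfl]
      rw [MvPolynomial.coeff_sum]
      have : ∀ i ∈ Finset.range (m + 1),
          MvPolynomial.coeff (Finsupp.single 1 q)
            (MvPolynomial.C (s i ^ q) * MvPolynomial.X (0 : Fin 2) ^ (i * q)) = 0 := by
        intro i _
        rw [MvPolynomial.coeff_C_mul, MvPolynomial.coeff_X_pow, if_neg, mul_zero]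
        intro hcontra
        have h1 := DFunLike.congr_fun hcontra (1 : Fin 2)
        simp [Finsupp.single_apply] at h1
        omega
      rw [Finset.sum_eq_zero this, sub_zero]
    rw [hzero] at this
    simp at this
  have hdeg : h.totalDegree ≤ m * q := by
    rw [hh, sub_eq_add_neg]
    refine le_trans (MvPolynomial.totalDegree_add _ _) (max_le ?_ ?_)
    · rw [MvPolynomial.totalDegree_X_pow]
      exact Nat.le_mul_of_pos_left q hm1
    · rw [MvPolynomial.totalDegree_neg]
      refine le_trans (MvPolynomial.totalDegree_finset_sum _ _) (Finset.sup_le fun i hi => ?_)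
      refine le_trans (MvPolynomial.totalDegree_mul _ _) ?_
      rw [MvPolynomial.totalDegree_C, MvPolynomial.totalDegree_X_pow, zero_add]
      exact Nat.mul_le_mul_right q (Nat.lt_succ_iff.mp (Finset.mem_range.mp hi))
  have hdvd : (PowerSeries.X : PowerSeries F) ^ N ∣
      MvPolynomial.aeval ![(PowerSeries.X : PowerSeries F), PowerSeries.mk s] h := by
    rw [hh, map_sub, map_pow, map_sum, MvPolynomial.aeval_X]
    simp only [map_mul, map_pow, MvPolynomial.aeval_X, MvPolynomial.aeval_C,
      Matrix.cons_val_one, Matrix.head_cons, Matrix.cons_val_zero]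
    rw [PowerSeries.X_pow_dvd_iff]
    intro n hn
    rw [map_sub, coeff_pow_p_pow p, map_sum]
    have hsum : ∀ i ∈ Finset.range (m + 1),
        PowerSeries.coeff n ((algebraMap F (PowerSeries F)) (s i) ^ q *
          (PowerSeries.X : PowerSeries F) ^ (i * q)) =
        if n = i * q then s i ^ q else 0 := by
      intro i _
      rw [← map_pow, Algebra.algebraMap_eq_smul_one, smul_mul_assoc, one_mul, map_smul,
        PowerSeries.coeff_X_pow, smul_eq_mul]
      split_ifs <;> simp
    rw [Finset.sum_congr rfl hsum]
    by_cases hd : q ∣ n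
    · obtain ⟨c, rfl⟩ := hd
      have hcm : c ∈ Finset.range (m + 1) := by
        rw [Finset.mem_range, Nat.lt_succ_iff, hm]
        have : q * c ≤ N - 1 := by omega
        calc c = q * c / q := by rw [Nat.mul_div_cancel_left c hq0]
        _ ≤ (N - 1) / q := Nat.div_le_div_right this
      have hcond : ∀ i : ℕ, (q * c = i * q) ↔ (i = c) := by
        intro i
        rw [mul_comm i q]
        exact ⟨fun hx => (Nat.eq_of_mul_eq_mul_left hq0 hx).symm, fun hx => by rw [hx]⟩
      simp_rw [hcond]
      rw [Finset.sum_ite_eq' (Finset.range (m + 1)) c, if_pos hcm,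
        if_pos (Dvd.intro c rfl), Nat.mul_div_cancel_left c hq0, PowerSeries.coeff_mk, sub_self]
    · rw [if_neg hd, Finset.sum_eq_zero, sub_zero]
      intro i _
      rw [if_neg]
      intro hx
      exact hd ⟨i, by rw [hx, mul_comm]⟩
  refine le_trans (Nat.sInf_le ⟨h, hne, rfl, hdvd⟩) hdeg
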